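/- Let (m₁,m₂,m₃,ξ,p) be a collision solution of the reduced two-body system on [t₀, t*), i.e. ξ(t) → +∞ as t → t*⁻. Then m₃(t) → 0 as t → t*⁻. -/

import Mathlib

open Filter Set

/-- The filter of approach `t → t*⁻`, where `t* ∈ ℝ ∪ {±∞}` is encoded as an `EReal`:
for finite `t*` this is `𝓝[<] t*`, and for `t* = ⊤` it is `atTop`. -/
noncomputable def approachFilter (tstar : EReal) : Filter ℝ :=
  Filter.comap (fun t : ℝ => (t : EReal)) (nhdsWithin tstar (Set.Iio tstar))

/-- Membership of the "good" set in the approach filter. -/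
lemma approach_eventually (t0 : ℝ) (tstar : EReal) (ht0 : (t0 : EReal) < tstar) :
    ∀ᶠ t in approachFilter tstar, t0 ≤ t ∧ (t : EReal) < tstar := by
  have hV : Ioi (t0 : EReal) ∩ Iio tstar ∈ nhdsWithin tstar (Set.Iio tstar) :=
    inter_mem (mem_nhdsWithin_of_mem_nhds (isOpen_Ioi.mem_nhds ht0)) self_mem_nhdsWithin
  refine mem_of_superset (Filter.preimage_mem_comap hV) ?_
  rintro t ⟨h1, h2⟩
  exact ⟨le_of_lt (EReal.coe_lt_coe_iff.mp h1), h2⟩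

/-- Along a collision solution of the reduced two-body system (`ξ(t) → +∞` as `t → t*⁻`),
one has `m₃(t) → 0` as `t → t*⁻`. -/
theorem m3_tendsto_zero_at_collision
    (t0 : ℝ) (tstar : EReal) (ht0 : (t0 : EReal) < tstar)
    (m1 m2 m3 xi p : ℝ → ℝ)
    (hm1 : ∀ t : ℝ, t0 ≤ t → (t : EReal) < tstar →
      HasDerivAt m1 (xi t * (-(m2 t)^2 + (m3 t)^2 + 2 * m2 t * m3 t * xi t)) t)
    (hm2 : ∀ t : ℝ, t0 ≤ t → (t : EReal) < tstar →
      HasDerivAt m2 (m1 t * m2 t * xi t - m3 t * p t - 2 * m1 t * m3 t * (xi t)^2) t)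
    (hm3 : ∀ t : ℝ, t0 ≤ t → (t : EReal) < tstar →
      HasDerivAt m3 (m2 t * p t - m1 t * m3 t * xi t) t)
    (hxi : ∀ t : ℝ, t0 ≤ t → (t : EReal) < tstar →
      HasDerivAt xi (-((xi t)^2 + 1) * (2 * p t - m1 t)) t)
    (hp : ∀ t : ℝ, t0 ≤ t → (t : EReal) < tstar →
      HasDerivAt p (-((xi t)^2 + 1) * (1 + m2 t * m3 t - 2 * (m3 t)^2 * xi t)) t)
    (hcoll : Tendsto xi (approachFilter tstar) atTop) :
    Tendsto m3 (approachFilter tstar) (nhds 0) := by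
  -- conserved quantities: energy E and squared total angular momentum N
  set E : ℝ → ℝ := fun t => p t ^ 2 - m1 t * p t + (m3 t) ^ 2 * (xi t) ^ 2
      - m2 t * m3 t * xi t - xi t with hEdef
  set N : ℝ → ℝ := fun t => (m1 t) ^ 2 + (m2 t) ^ 2 + (m3 t) ^ 2 with hNdef
  clear_value E N
  have hEderiv : ∀ s : ℝ, t0 ≤ s → (s : EReal) < tstar → HasDerivAt E 0 s := by
    intro s h1 h2
    have d1 := hm1 s h1 h2
    have d2 := hm2 s h1 h2
    have d3 := hm3 s h1 h2
    have d4 := hxi s h1 h2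
    have d5 := hp s h1 h2
    have h := ((((d5.pow 2).sub (d1.mul d5)).add ((d3.pow 2).mul (d4.pow 2))).sub
      ((d2.mul d3).mul d4)).sub d4
    rw [hEdef]
    refine h.congr_deriv ?_
    push_cast
    simp only [Pi.pow_apply, Pi.mul_apply]
    ring
  have hNderiv : ∀ s : ℝ, t0 ≤ s → (s : EReal) < tstar → HasDerivAt N 0 s := by
    intro s h1 h2
    have d1 := hm1 s h1 h2
    have d2 := hm2 s h1 h2
    have d3 := hm3 s h1 h2
    have h := ((d1.pow 2).add (d2.pow 2)).add (d3.pow 2)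
    rw [hNdef]
    refine h.congr_deriv ?_
    push_cast
    ring
  -- constancy on the interval
  have hconst : ∀ (f : ℝ → ℝ), (∀ s : ℝ, t0 ≤ s → (s : EReal) < tstar → HasDerivAt f 0 s) →
      ∀ t : ℝ, t0 ≤ t → (t : EReal) < tstar → f t = f t0 := by
    intro f hf t h1 h2
    have hsub : ∀ s ∈ Icc t0 t, HasDerivAt f 0 s := by
      intro s hs
      exact hf s hs.1 (lt_of_le_of_lt (EReal.coe_le_coe_iff.mpr hs.2) h2)
    have hcont : ContinuousOn f (Icc t0 t) := fun s hs =>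
      ((hsub s hs).continuousAt).continuousWithinAt
    exact constant_of_has_deriv_right_zero hcont
      (fun s hs => ((hsub s (Ico_subset_Icc_self hs)).hasDerivWithinAt)) t
      (right_mem_Icc.mpr h1)
  have hEconst := hconst E hEderiv
  have hNconst := hconst N hNderiv
  set E0 : ℝ := E t0 with hE0
  set N0 : ℝ := N t0 with hN0
  clear_value E0 N0
  have hN0nonneg : 0 ≤ N0 := by rw [hN0, hNdef]; positivity
  set K : ℝ := 2 * |E0| + 3 * N0 / 2 + 2 with hK
  clear_value K
  -- key pointwise bound
  have hbound : ∀ t : ℝ, t0 ≤ t → (t : EReal) < tstar → 1 ≤ xi t →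
      (m3 t) ^ 2 ≤ K * (xi t)⁻¹ := by
    intro t h1 h2 hx1
    have hE := hEconst t h1 h2
    have hN := hNconst t h1 h2
    simp only [hEdef, hNdef] at hE hN
    have hxpos : (0:ℝ) < xi t := lt_of_lt_of_le one_pos hx1
    have habs : E0 ≤ |E0| := le_abs_self E0
    -- from conservation: m3² ξ² ≤ 2E0 + 3N0/2 + 2ξ  (AM–GM on the cross terms)
    have ha : m2 t * m3 t * xi t ≤ (m2 t ^ 2 + m3 t ^ 2 * xi t ^ 2) / 2 := by
      nlinarith [sq_nonneg (m2 t - m3 t * xi t)]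
    have hb : m1 t * p t - p t ^ 2 ≤ m1 t ^ 2 / 4 := by
      nlinarith [sq_nonneg (2 * p t - m1 t)]
    have hm2sq : m2 t ^ 2 ≤ N0 := by nlinarith [sq_nonneg (m1 t), sq_nonneg (m3 t)]
    have hm1sq : m1 t ^ 2 ≤ N0 := by nlinarith [sq_nonneg (m2 t), sq_nonneg (m3 t)]
    have key : (m3 t) ^ 2 * (xi t) ^ 2 ≤ 2 * |E0| + 3 * N0 / 2 + 2 * xi t := by
      linarith [ha, hb, hm2sq, hm1sq, habs, hE]
    have h5 : 0 ≤ (2 * |E0| + 3 * N0 / 2) * (xi t - 1) :=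
      mul_nonneg (by positivity) (by linarith)
    have : (m3 t) ^ 2 * xi t ≤ K := by
      nlinarith [key, h5, hxpos, hK]
    calc (m3 t) ^ 2 = (m3 t) ^ 2 * xi t * (xi t)⁻¹ := by
            field_simp
      _ ≤ K * (xi t)⁻¹ := by
            apply mul_le_mul_of_nonneg_right this (by positivity)
  -- eventual bound along the filter
  have hev1 := approach_eventually t0 tstar ht0
  have hev2 : ∀ᶠ t in approachFilter tstar, 1 ≤ xi t := hcoll.eventually_ge_atTop 1
  have hev : ∀ᶠ t in approachFilter tstar, (m3 t) ^ 2 ≤ K * (xi t)⁻¹ := by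
    filter_upwards [hev1, hev2] with t ht hx
    exact hbound t ht.1 ht.2 hx
  have hto : Tendsto (fun t => K * (xi t)⁻¹) (approachFilter tstar) (nhds 0) := by
    have := (hcoll.inv_tendsto_atTop).const_mul K
    simpa using this
  have hsq : Tendsto (fun t => (m3 t) ^ 2) (approachFilter tstar) (nhds 0) :=
    squeeze_zero' (Eventually.of_forall fun t => sq_nonneg _) hev hto
  have h2 : Tendsto (fun t => Real.sqrt ((m3 t) ^ 2)) (approachFilter tstar) (nhds 0) := by
    have := (Real.continuous_sqrt.tendsto 0).comp hsq
    simpa [Function.comp_def] using this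
  simp only [Real.sqrt_sq_eq_abs] at h2
  exact (tendsto_zero_iff_abs_tendsto_zero _).mpr h2
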